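/- Assume the coordinate quasi-Codazzi setup on U with vanishing relative torsions: T⁺(X,Y) = 0 and T⁻(X,Y) = 0 for all smooth vector fields X, Y. Let ρ be a weak contrast function on U compatible with the structure, i.e. for all x ∈ U and v, w, u ∈ ℝⁿ: h x v w = −ρ[v|w](x) and C(v,w,u)(x) = ρ[vw|u](x) − ρ[u|vw](x), where v, w, u are regarded as constant vector fields. Then for all x ∈ U and v, w, u ∈ ℝⁿ: p x ((∇⁺_v(Φ⁺w))(x)) (Φ⁻ x u) = −(1/2) · ρ[vw|u](x), and p x (Φ⁺ x u) ((∇⁻_v(Φ⁻w))(x)) = −(1/2) · ρ[u|vw](x). (Paper's Corollary 3.28.) -/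

import Mathlib

noncomputable section

open Set

/-- ℝⁿ. -/
abbrev Vn (n : ℕ) : Type := Fin n → ℝ

/-- Pairings (fiber metrics pairing `E⁺` with `E⁻`) on the trivialized bundle. -/
abbrev Pairn (n : ℕ) : Type := Vn n →L[ℝ] Vn n →L[ℝ] ℝ

/-- Connection forms on the trivialized bundle. -/
abbrev Connn (n : ℕ) : Type := Vn n →L[ℝ] Vn n →L[ℝ] Vn n

/-- Bundle maps `TU → E±` in the trivialization. -/
abbrev Bdln (n : ℕ) : Type := Vn n →L[ℝ] Vn n

/-- Covariant derivative of the section `ν` along the vector field `X`,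
for the connection with connection form `A`. -/
def cov {n : ℕ} (A : Vn n → Connn n) (X ν : Vn n → Vn n) (x : Vn n) : Vn n :=
  fderiv ℝ ν x (X x) + A x (X x) (ν x)

/-- Lie bracket of vector fields on an open set of ℝⁿ. -/
def lieB {n : ℕ} (X Y : Vn n → Vn n) (x : Vn n) : Vn n :=
  fderiv ℝ Y x (X x) - fderiv ℝ X x (Y x)

/-- The section `Φ±Y : x ↦ Φ± x (Y x)`. -/
def secPhi {n : ℕ} (Φ : Vn n → Bdln n) (Y : Vn n → Vn n) : Vn n → Vn n :=
  fun x => Φ x (Y x)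

/-- The induced (possibly degenerate) metric `h x y z = 2 p x (Φ⁺ x y) (Φ⁻ x z)`. -/
def hmet {n : ℕ} (p : Vn n → Pairn n) (Φp Φm : Vn n → Bdln n) (x y z : Vn n) : ℝ :=
  2 * p x (Φp x y) (Φm x z)

/-- The generalized Amari–Chentsov cubic tensor. -/
def Ctensor {n : ℕ} (p : Vn n → Pairn n) (Ap Am : Vn n → Connn n)
    (Φp Φm : Vn n → Bdln n) (X Y Z : Vn n → Vn n) (x : Vn n) : ℝ :=
  -2 * (p x (cov Ap X (secPhi Φp Y) x) (Φm x (Z x))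
        - p x (Φp x (Z x)) (cov Am X (secPhi Φm Y) x))

/-- The relative torsion `T(X,Y) = ∇_X(ΦY) − ∇_Y(ΦX) − Φ[X,Y]`. -/
def Ttor {n : ℕ} (A : Vn n → Connn n) (Φ : Vn n → Bdln n)
    (X Y : Vn n → Vn n) (x : Vn n) : Vn n :=
  cov A X (secPhi Φ Y) x - cov A Y (secPhi Φ X) x - Φ x (lieB X Y x)

/-- The Kossowski pseudo-connection. -/
def Koss {n : ℕ} (p : Vn n → Pairn n) (Φp Φm : Vn n → Bdln n)
    (X Y Z : Vn n → Vn n) (x : Vn n) : ℝ :=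
  fderiv ℝ (fun y => p y (Φp y (Y y)) (Φm y (Z y))) x (X x)
  + fderiv ℝ (fun y => p y (Φp y (Z y)) (Φm y (X y))) x (Y x)
  - fderiv ℝ (fun y => p y (Φp y (X y)) (Φm y (Y y))) x (Z x)
  - p x (Φp x (X x)) (Φm x (lieB Y Z x))
  + p x (Φp x (Y x)) (Φm x (lieB Z X x))
  + p x (Φp x (Z x)) (Φm x (lieB X Y x))

/-- The curvature of a connection form `A` at `x` in directions `v`, `w`. -/
def curvA {n : ℕ} (A : Vn n → Connn n) (x v w : Vn n) : Vn n →L[ℝ] Vn n :=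
  fderiv ℝ A x v w - fderiv ℝ A x w v + (A x v).comp (A x w) - (A x w).comp (A x v)

/-- `ρ[v|w](x) = D²ρ(x,x)[(v,0),(0,w)]`. -/
def rho2 {n : ℕ} (ρ : Vn n × Vn n → ℝ) (x v w : Vn n) : ℝ :=
  fderiv ℝ (fun q => fderiv ℝ ρ q (0, w)) (x, x) (v, 0)

/-- `ρ[vw|u](x) = D³ρ(x,x)[(v,0),(w,0),(0,u)]`. -/
def rho3L {n : ℕ} (ρ : Vn n × Vn n → ℝ) (x v w u : Vn n) : ℝ :=
  fderiv ℝ (fun q => fderiv ℝ (fun r => fderiv ℝ ρ r (0, u)) q (w, 0)) (x, x) (v, 0)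

/-- `ρ[u|vw](x) = D³ρ(x,x)[(u,0),(0,v),(0,w)]`. -/
def rho3R {n : ℕ} (ρ : Vn n × Vn n → ℝ) (x v w u : Vn n) : ℝ :=
  fderiv ℝ (fun q => fderiv ℝ (fun r => fderiv ℝ ρ r (0, w)) q (0, v)) (x, x) (u, 0)


section AuxLemmas
variable {E A B : Type*} [NormedAddCommGroup E] [NormedSpace ℝ E]
  [NormedAddCommGroup A] [NormedSpace ℝ A] [NormedAddCommGroup B] [NormedSpace ℝ B]

lemma aux_diffAt_apply_const {f : E → A →L[ℝ] B} {x : E} (hf : DifferentiableAt ℝ f x) (a : A) :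
    DifferentiableAt ℝ (fun y => f y a) x :=
  (ContinuousLinearMap.apply ℝ B a).differentiableAt.comp x hf

lemma aux_hasFDerivAt_apply_const {f : E → A →L[ℝ] B} {x : E} (hf : DifferentiableAt ℝ f x)
    (a : A) :
    HasFDerivAt (fun y => f y a) ((ContinuousLinearMap.apply ℝ B a).comp (fderiv ℝ f x)) x :=
  (ContinuousLinearMap.apply ℝ B a).hasFDerivAt.comp x hf.hasFDerivAt

lemma aux_fderiv_apply_const {f : E → A →L[ℝ] B} {x : E} (hf : DifferentiableAt ℝ f x)
    (a : A) (v : E) :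
    fderiv ℝ (fun y => f y a) x v = fderiv ℝ f x v a := by
  rw [(aux_hasFDerivAt_apply_const hf a).fderiv]; rfl

end AuxLemmas

set_option maxHeartbeats 2000000 in
/-- Paper's Corollary 3.28: for a quasi-Codazzi structure (in a trivialization, with
vanishing relative torsions) and a compatible weak contrast function `ρ`, one has
`p(∇⁺_v(Φ⁺w), Φ⁻u) = −(1/2)ρ[vw|u]` and `p(Φ⁺u, ∇⁻_v(Φ⁻w)) = −(1/2)ρ[u|vw]`. -/
theorem statement18 {n : ℕ} (U : Set (Vn n)) (hUopen : IsOpen U)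
    (p : Vn n → Pairn n) (hpsmooth : ContDiffOn ℝ (⊤ : ℕ∞) p U)
    (Ap Am : Vn n → Connn n)
    (hApsmooth : ContDiffOn ℝ (⊤ : ℕ∞) Ap U) (hAmsmooth : ContDiffOn ℝ (⊤ : ℕ∞) Am U)
    (hdual : ∀ x ∈ U, ∀ v a b : Vn n,
      fderiv ℝ p x v a b = p x (Ap x v a) b + p x a (Am x v b))
    (Φp Φm : Vn n → Bdln n)
    (hΦpsmooth : ContDiffOn ℝ (⊤ : ℕ∞) Φp U) (hΦmsmooth : ContDiffOn ℝ (⊤ : ℕ∞) Φm U)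
    (hLag : ∀ x ∈ U, ∀ y z : Vn n, p x (Φp x y) (Φm x z) = p x (Φp x z) (Φm x y))
    -- vanishing of both relative torsions (quasi-Codazzi structure)
    (hTp : ∀ X Y : Vn n → Vn n,
      ContDiffOn ℝ (⊤ : ℕ∞) X U → ContDiffOn ℝ (⊤ : ℕ∞) Y U →
      ∀ x ∈ U, Ttor Ap Φp X Y x = 0)
    (hTm : ∀ X Y : Vn n → Vn n,
      ContDiffOn ℝ (⊤ : ℕ∞) X U → ContDiffOn ℝ (⊤ : ℕ∞) Y U →
      ∀ x ∈ U, Ttor Am Φm X Y x = 0)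
    -- a compatible weak contrast function
    (ρ : Vn n × Vn n → ℝ)
    (hρsmooth : ContDiffOn ℝ (⊤ : ℕ∞) ρ (U ×ˢ U))
    (hρ0 : ∀ x ∈ U, ρ (x, x) = 0)
    (hρ1 : ∀ x ∈ U, fderiv ℝ ρ (x, x) = 0)
    (hcompath : ∀ x ∈ U, ∀ v w : Vn n, hmet p Φp Φm x v w = -(rho2 ρ x v w))
    (hcompatC : ∀ x ∈ U, ∀ v w u : Vn n,
      Ctensor p Ap Am Φp Φm (fun _ => v) (fun _ => w) (fun _ => u) x
        = rho3L ρ x v w u - rho3R ρ x v w u) :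
    ∀ x ∈ U, ∀ v w u : Vn n,
      p x (cov Ap (fun _ => v) (secPhi Φp (fun _ => w)) x) (Φm x u)
        = -((1:ℝ)/2) * rho3L ρ x v w u ∧
      p x (Φp x u) (cov Am (fun _ => v) (secPhi Φm (fun _ => w)) x)
        = -((1:ℝ)/2) * rho3R ρ x v w u := by
  intro x hx
  have hUU : IsOpen (U ×ˢ U) := hUopen.prod hUopen
  have hxxU : (x, x) ∈ U ×ˢ U := ⟨hx, hx⟩
  have hone : ((⊤:ℕ∞) : WithTop ℕ∞) ≠ 0 := by simp
  have htwo : minSmoothness ℝ 2 ≤ ((⊤:ℕ∞) : WithTop ℕ∞) := by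
    rw [minSmoothness_of_isRCLikeNormedField]; norm_cast
  have hsucc : ((⊤:ℕ∞) : WithTop ℕ∞) + 1 ≤ ((⊤:ℕ∞) : WithTop ℕ∞) := by simp
  -- basic differentiability facts
  have hpd : ∀ y ∈ U, DifferentiableAt ℝ p y := fun y hy =>
    (hpsmooth.contDiffAt (hUopen.mem_nhds hy)).differentiableAt hone
  have hΦpd : ∀ y ∈ U, DifferentiableAt ℝ Φp y := fun y hy =>
    (hΦpsmooth.contDiffAt (hUopen.mem_nhds hy)).differentiableAt hone
  have hΦmd : ∀ y ∈ U, DifferentiableAt ℝ Φm y := fun y hy =>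
    (hΦmsmooth.contDiffAt (hUopen.mem_nhds hy)).differentiableAt hone
  have hFsm : ContDiffOn ℝ (⊤:ℕ∞) (fderiv ℝ ρ) (U ×ˢ U) :=
    hρsmooth.fderiv_of_isOpen hUU hsucc
  have hSsm : ContDiffOn ℝ (⊤:ℕ∞) (fderiv ℝ (fderiv ℝ ρ)) (U ×ˢ U) :=
    hFsm.fderiv_of_isOpen hUU hsucc
  have hFd : ∀ q ∈ U ×ˢ U, DifferentiableAt ℝ (fderiv ℝ ρ) q := fun q hq =>
    (hFsm.contDiffAt (hUU.mem_nhds hq)).differentiableAt hone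
  have hSd : ∀ q ∈ U ×ˢ U, DifferentiableAt ℝ (fderiv ℝ (fderiv ℝ ρ)) q := fun q hq =>
    (hSsm.contDiffAt (hUU.mem_nhds hq)).differentiableAt hone
  -- double application of the second derivative of F := fderiv ρ
  have happly2 : ∀ a b c : Vn n × Vn n,
      fderiv ℝ (fun q => fderiv ℝ (fderiv ℝ ρ) q a b) (x,x) c
        = fderiv ℝ (fderiv ℝ (fderiv ℝ ρ)) (x,x) c a b := by
    intro a b c
    have i1 : fderiv ℝ (fun q => fderiv ℝ (fderiv ℝ ρ) q a b) (x,x) c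
        = fderiv ℝ (fun q => fderiv ℝ (fderiv ℝ ρ) q a) (x,x) c b :=
      aux_fderiv_apply_const (aux_diffAt_apply_const (hSd _ hxxU) a) b c
    have i2 : fderiv ℝ (fun q => fderiv ℝ (fderiv ℝ ρ) q a) (x,x) c
        = fderiv ℝ (fderiv ℝ (fderiv ℝ ρ)) (x,x) c a :=
      aux_fderiv_apply_const (hSd _ hxxU) a c
    rw [i1, i2]
  have hrepr : ∀ a b c : Vn n × Vn n,
      fderiv ℝ (fun q => fderiv ℝ (fun r => fderiv ℝ ρ r b) q a) (x,x) c
        = fderiv ℝ (fderiv ℝ (fderiv ℝ ρ)) (x,x) c a b := by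
    intro a b c
    have h1 : (fun q => fderiv ℝ (fun r => fderiv ℝ ρ r b) q a)
        =ᶠ[nhds (x,x)] (fun q => fderiv ℝ (fderiv ℝ ρ) q a b) := by
      filter_upwards [hUU.mem_nhds hxxU] with q hq
      exact aux_fderiv_apply_const (hFd q hq) b a
    rw [h1.fderiv_eq]
    exact happly2 a b c
  have hrho3L : ∀ v' w' u' : Vn n, rho3L ρ x v' w' u'
      = fderiv ℝ (fderiv ℝ (fderiv ℝ ρ)) (x,x) (v',0) (w',0) (0,u') :=
    fun v' w' u' => hrepr (w',0) (0,u') (v',0)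
  have hrho3R : ∀ v' w' u' : Vn n, rho3R ρ x v' w' u'
      = fderiv ℝ (fderiv ℝ (fderiv ℝ ρ)) (x,x) (u',0) (0,v') (0,w') :=
    fun v' w' u' => hrepr (0,v') (0,w') (u',0)
  -- symmetry of the third derivative in slots 1,2
  have hsym12 : ∀ a b c : Vn n × Vn n,
      fderiv ℝ (fderiv ℝ (fderiv ℝ ρ)) (x,x) a b c
        = fderiv ℝ (fderiv ℝ (fderiv ℝ ρ)) (x,x) b a c := by
    intro a b c
    have h : IsSymmSndFDerivAt ℝ (fderiv ℝ ρ) (x,x) :=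
      (hFsm.contDiffAt (hUU.mem_nhds hxxU)).isSymmSndFDerivAt htwo
    exact congrArg (fun L => L c) (h a b)
  -- symmetry of the third derivative in slots 2,3
  have hsym23 : ∀ a b c : Vn n × Vn n,
      fderiv ℝ (fderiv ℝ (fderiv ℝ ρ)) (x,x) a b c
        = fderiv ℝ (fderiv ℝ (fderiv ℝ ρ)) (x,x) a c b := by
    intro a b c
    have h1 : (fun q => fderiv ℝ (fderiv ℝ ρ) q b c)
        =ᶠ[nhds (x,x)] (fun q => fderiv ℝ (fderiv ℝ ρ) q c b) := by
      filter_upwards [hUU.mem_nhds hxxU] with q hq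
      exact (hρsmooth.contDiffAt (hUU.mem_nhds hq)).isSymmSndFDerivAt htwo b c
    calc fderiv ℝ (fderiv ℝ (fderiv ℝ ρ)) (x,x) a b c
        = fderiv ℝ (fun q => fderiv ℝ (fderiv ℝ ρ) q b c) (x,x) a := (happly2 b c a).symm
      _ = fderiv ℝ (fun q => fderiv ℝ (fderiv ℝ ρ) q c b) (x,x) a := by rw [h1.fderiv_eq]
      _ = fderiv ℝ (fderiv ℝ (fderiv ℝ ρ)) (x,x) a c b := happly2 c b a
  -- the Γ quantities
  set Gp : Vn n → Vn n → Vn n → ℝ :=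
    fun v w u => p x (cov Ap (fun _ => v) (secPhi Φp (fun _ => w)) x) (Φm x u) with hGpdef
  set Gm : Vn n → Vn n → Vn n → ℝ :=
    fun v w u => p x (Φp x u) (cov Am (fun _ => v) (secPhi Φm (fun _ => w)) x) with hGmdef
  -- cov for constant vector fields
  have hcovp : ∀ v' w' : Vn n, cov Ap (fun _ => v') (secPhi Φp (fun _ => w')) x
      = fderiv ℝ Φp x v' w' + Ap x v' (Φp x w') := by
    intro v' w'
    have h1 : fderiv ℝ (fun y => Φp y w') x v' = fderiv ℝ Φp x v' w' :=
      aux_fderiv_apply_const (hΦpd x hx) w' v'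
    simp only [cov]
    rw [show fderiv ℝ (secPhi Φp fun _ => w') x v' = fderiv ℝ Φp x v' w' from h1]
    rfl
  have hcovm : ∀ v' w' : Vn n, cov Am (fun _ => v') (secPhi Φm (fun _ => w')) x
      = fderiv ℝ Φm x v' w' + Am x v' (Φm x w') := by
    intro v' w'
    have h1 : fderiv ℝ (fun y => Φm y w') x v' = fderiv ℝ Φm x v' w' :=
      aux_fderiv_apply_const (hΦmd x hx) w' v'
    simp only [cov]
    rw [show fderiv ℝ (secPhi Φm fun _ => w') x v' = fderiv ℝ Φm x v' w' from h1]
    rfl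
  -- derivative of the pairing function
  have hpairHas : ∀ w' u' : Vn n, ∃ D : Vn n →L[ℝ] ℝ,
      HasFDerivAt (fun z => p z (Φp z w') (Φm z u')) D x ∧
      ∀ v', D v' = Gp v' w' u' + Gm v' u' w' := by
    intro w' u'
    have hax : HasFDerivAt (fun z => Φp z w')
        ((ContinuousLinearMap.apply ℝ (Vn n) w').comp (fderiv ℝ Φp x)) x :=
      aux_hasFDerivAt_apply_const (hΦpd x hx) w'
    have hbx : HasFDerivAt (fun z => Φm z u')
        ((ContinuousLinearMap.apply ℝ (Vn n) u').comp (fderiv ℝ Φm x)) x :=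
      aux_hasFDerivAt_apply_const (hΦmd x hx) u'
    have h1 := (hpd x hx).hasFDerivAt.clm_apply hax
    have h2 := h1.clm_apply hbx
    refine ⟨_, h2, ?_⟩
    intro v'
    simp only [ContinuousLinearMap.add_apply, ContinuousLinearMap.comp_apply,
      ContinuousLinearMap.flip_apply, ContinuousLinearMap.apply_apply]
    rw [hdual x hx v' (Φp x w') (Φm x u')]
    simp only [hGpdef, hGmdef]
    rw [hcovp v' w', hcovm v' u']
    simp only [map_add, ContinuousLinearMap.add_apply]
    ring
  -- Equation A : differentiating the compatibility h = -ρ[·|·]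
  have hEqA : ∀ v' w' u' : Vn n, 2 * (Gp v' w' u' + Gm v' u' w')
      = -(rho3L ρ x v' w' u' + rho3R ρ x v' u' w') := by
    intro v' w' u'
    obtain ⟨D, hD, hDv⟩ := hpairHas w' u'
    have hLHas : HasFDerivAt (fun y => hmet p Φp Φm y w' u') ((2:ℝ) • D) x := by
      simpa only [hmet] using hD.const_mul (2:ℝ)
    have hRloc : (fun y => hmet p Φp Φm y w' u') =ᶠ[nhds x]
        (fun y => -(rho2 ρ y w' u')) := by
      filter_upwards [hUopen.mem_nhds hx] with y hy using hcompath y hy w' u'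
    have hrho2loc : (fun y => rho2 ρ y w' u') =ᶠ[nhds x]
        (fun y => fderiv ℝ (fderiv ℝ ρ) (y,y) (w', 0) (0, u')) := by
      filter_upwards [hUopen.mem_nhds hx] with y hy
      exact aux_fderiv_apply_const (hFd (y,y) ⟨hy,hy⟩) (0,u') (w',0)
    have hdiag : HasFDerivAt (fun y : Vn n => ((y, y) : Vn n × Vn n))
        ((ContinuousLinearMap.id ℝ (Vn n)).prod (ContinuousLinearMap.id ℝ (Vn n))) x :=
      HasFDerivAt.prodMk (hasFDerivAt_id x) (hasFDerivAt_id x)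
    have hSab : DifferentiableAt ℝ
        (fun q => fderiv ℝ (fderiv ℝ ρ) q (w',0) (0,u')) (x,x) :=
      aux_diffAt_apply_const (aux_diffAt_apply_const (hSd _ hxxU) (w',0)) (0,u')
    have hcomp : HasFDerivAt (fun y => fderiv ℝ (fderiv ℝ ρ) ((y:Vn n),y) (w',0) (0,u'))
        ((fderiv ℝ (fun q => fderiv ℝ (fderiv ℝ ρ) q (w',0) (0,u')) (x,x)).comp
          ((ContinuousLinearMap.id ℝ (Vn n)).prod (ContinuousLinearMap.id ℝ (Vn n)))) x :=
      HasFDerivAt.comp (f := fun y : Vn n => ((y,y) : Vn n × Vn n)) x hSab.hasFDerivAt hdiag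
    have hsplit : ((v', v') : Vn n × Vn n) = (v',0) + (0,v') := by simp
    have hval : fderiv ℝ (fun y => rho2 ρ y w' u') x v'
        = rho3L ρ x v' w' u' + rho3R ρ x v' u' w' := by
      rw [hrho2loc.fderiv_eq, hcomp.fderiv]
      have e1 : (((fderiv ℝ (fun q => fderiv ℝ (fderiv ℝ ρ) q (w',0) (0,u')) (x,x)).comp
          ((ContinuousLinearMap.id ℝ (Vn n)).prod (ContinuousLinearMap.id ℝ (Vn n)))) : Vn n →L[ℝ] ℝ) v'
          = fderiv ℝ (fun q => fderiv ℝ (fderiv ℝ ρ) q (w',0) (0,u')) (x,x) ((v',v')) := rfl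
      rw [e1]
      rw [hsplit]
      have e6 : fderiv ℝ (fun q => fderiv ℝ (fderiv ℝ ρ) q (w',0) (0,u')) (x,x)
            (((v',0) : Vn n × Vn n) + ((0,v') : Vn n × Vn n))
          = fderiv ℝ (fun q => fderiv ℝ (fderiv ℝ ρ) q (w',0) (0,u')) (x,x) ((v',0) : Vn n × Vn n)
            + fderiv ℝ (fun q => fderiv ℝ (fderiv ℝ ρ) q (w',0) (0,u')) (x,x) ((0,v') : Vn n × Vn n) :=
        ContinuousLinearMap.map_add _ _ _
      rw [e6]
      rw [happly2, happly2, hrho3L, hrho3R]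
      rw [hsym12 ((0:Vn n),v') (w',0) (0,u')]
    have hfd : fderiv ℝ (fun y => hmet p Φp Φm y w' u') x
        = fderiv ℝ (fun y => -(rho2 ρ y w' u')) x := hRloc.fderiv_eq
    have e2 : fderiv ℝ (fun y => hmet p Φp Φm y w' u') x = (2:ℝ) • D := hLHas.fderiv
    have e3 : fderiv ℝ (fun y => -(rho2 ρ y w' u')) x v'
        = -(fderiv ℝ (fun y => rho2 ρ y w' u') x v') := by
      rw [fderiv_fun_neg]; rfl
    have e4 : ((2:ℝ) • D) v' = fderiv ℝ (fun y => -(rho2 ρ y w' u')) x v' := by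
      rw [← e2, hfd]
    rw [e3, hval] at e4
    have e5 : ((2:ℝ) • D) v' = 2 * D v' := by
      simp
    rw [e5, hDv v'] at e4
    linarith
  -- Equation B : the cubic-tensor compatibility
  have hEqB : ∀ v' w' u' : Vn n, -2 * (Gp v' w' u' - Gm v' w' u')
      = rho3L ρ x v' w' u' - rho3R ρ x v' w' u' := by
    intro v' w' u'
    have h := hcompatC x hx v' w' u'
    simp only [Ctensor] at h
    simp only [hGpdef, hGmdef]
    exact h
  -- symmetry of Gp and Gm in the first two slots (vanishing torsion)
  have hGpsym : ∀ v' w' u' : Vn n, Gp v' w' u' = Gp w' v' u' := by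
    intro v' w' u'
    have h := hTp (fun _ => v') (fun _ => w') contDiffOn_const contDiffOn_const x hx
    have hlie : lieB (fun _ => v') (fun _ => w') x = (0 : Vn n) := by
      simp [lieB]
    simp only [Ttor, hlie, map_zero, sub_zero, sub_eq_zero] at h
    simp only [hGpdef]
    rw [h]
  have hGmsym : ∀ v' w' u' : Vn n, Gm v' w' u' = Gm w' v' u' := by
    intro v' w' u'
    have h := hTm (fun _ => v') (fun _ => w') contDiffOn_const contDiffOn_const x hx
    have hlie : lieB (fun _ => v') (fun _ => w') x = (0 : Vn n) := by
      simp [lieB]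
    simp only [Ttor, hlie, map_zero, sub_zero, sub_eq_zero] at h
    simp only [hGmdef]
    rw [h]
  -- symmetry of rho3L and rho3R in the first two slots
  have hLsym : ∀ v' w' u' : Vn n, rho3L ρ x v' w' u' = rho3L ρ x w' v' u' := by
    intro v' w' u'
    rw [hrho3L, hrho3L]
    exact hsym12 (v',0) (w',0) (0,u')
  have hRsym : ∀ v' w' u' : Vn n, rho3R ρ x v' w' u' = rho3R ρ x w' v' u' := by
    intro v' w' u'
    rw [hrho3R, hrho3R]
    exact hsym23 (u',0) (0,v') (0,w')
  -- antisymmetry of f := Gp + L/2 in the last two slots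
  have hAnti : ∀ v' w' u' : Vn n,
      (Gp v' w' u' + (1/2) * rho3L ρ x v' w' u')
        + (Gp v' u' w' + (1/2) * rho3L ρ x v' u' w') = 0 := by
    intro v' w' u'
    have a1 := hEqA v' w' u'
    have b1 := hEqB v' u' w'
    linarith
  intro v w u
  have h1 : Gp v w u = -((1:ℝ)/2) * rho3L ρ x v w u := by
    have a1 := hAnti w v u
    have a2 := hAnti u w v
    have a3 := hAnti v u w
    have s1 := hGpsym v w u
    have s2 := hGpsym w u v
    have s3 := hGpsym u v w
    have l1 := hLsym v w u
    have l2 := hLsym w u v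
    have l3 := hLsym u v w
    linarith
  have h2 : Gm v w u = -((1:ℝ)/2) * rho3R ρ x v w u := by
    have b := hEqB v w u
    linarith
  exact ⟨h1, h2⟩
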